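/- arXiv:1612.03450 — 5 statements merged into one kernel-verified Lean document; each statement's English description precedes it below -/
import Mathlib

section
/- Pythagorean decomposition for projected residuals. Let S ⊆ ℝ^m be a linear subspace with orthogonal projection P onto S, let Y ∈ ℝ^{m×k} be any matrix, let P_Y denote the orthogonal projection onto the column space of Y, and let P' denote the orthogonal projection onto the column space of PY. Then for every y ∈ ℝ^m: ‖P(I − P_Y)y‖₂² = ‖P(I − P')y‖₂² + ‖(P' − P P_Y)y‖₂². -/
open MeasureTheory ProbabilityTheory Real Finset
open scoped RealInnerProductSpace ENNReal NNReal

noncomputable section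

abbrev Vec (m : ℕ) := EuclideanSpace ℝ (Fin m)

/-- Residual of `y` after orthogonal projection onto the span of the dictionary atoms
indexed by `Λ`; this equals `(I - D_Λ D_Λ†) y`. -/
def projResidual {m : ℕ} {ι : Type*} (D : ι → Vec m) (Λ : Finset ι) (y : Vec m) : Vec m :=
  y - (Submodule.orthogonalProjectionOnto (Submodule.span ℝ (D '' (↑Λ : Set ι))) y : Vec m)

/-- `Λ, r` is a run of `T` iterations of OMP on data point `y` with dictionary `D`
(ties in the selection rule broken arbitrarily). -/
structure IsOMPRun {m : ℕ} {ι : Type*} [DecidableEq ι] (D : ι → Vec m) (y : Vec m) (T : ℕ)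
    (Λ : ℕ → Finset ι) (r : ℕ → Vec m) : Prop where
  init_idx : Λ 0 = ∅
  init_res : r 0 = y
  step : ∀ s < T, ∃ j ∉ Λ s,
    Λ (s + 1) = insert j (Λ s) ∧ ∀ j' ∉ Λ s, |⟪D j', r s⟫| ≤ |⟪D j, r s⟫|
  res : ∀ s < T, r (s + 1) = projResidual D (Λ (s + 1)) y

/-- `sel, q` is a run of `T` iterations of MP on data point `y` with dictionary `D`
(ties broken arbitrarily); `sel s` is the index `ω_{s+1}` selected in iteration `s+1`. -/
structure IsMPRun {m : ℕ} {ι : Type*} (D : ι → Vec m) (y : Vec m) (T : ℕ)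
    (sel : ℕ → ι) (q : ℕ → Vec m) : Prop where
  init : q 0 = y
  sel_max : ∀ s < T, ∀ j, |⟪D j, q s⟫| ≤ |⟪D (sel s), q s⟫|
  res : ∀ s < T, q (s + 1) = q s - (⟪D (sel s), q s⟫ / ‖D (sel s)‖ ^ 2) • D (sel s)

section Concrete

variable {m : ℕ} {ι : Type*} [Fintype ι] [LinearOrder ι]

/-- The index selected by OMP with smallest-index tie-breaking, given the current active
set `Λ` and residual `r` (`none` if the dictionary is exhausted). -/
def ompSelect (D : ι → Vec m) (Λ : Finset ι) (r : Vec m) : Option ι :=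
  let S := (Finset.univ \ Λ).filter fun j => ∀ j' ∈ Finset.univ \ Λ, |⟪D j', r⟫| ≤ |⟪D j, r⟫|
  if h : S.Nonempty then some (S.min' h) else none

/-- The state (active set, residual) of OMP with smallest-index tie-breaking after `s`
iterations. -/
def ompState (D : ι → Vec m) (y : Vec m) : ℕ → Finset ι × Vec m
  | 0 => (∅, y)
  | s + 1 =>
    let p := ompState D y s
    match ompSelect D p.1 p.2 with
    | some j => (insert j p.1, projResidual D (insert j p.1) y)
    | none => p

/-- The index selected by MP with smallest-index tie-breaking for the residual `q`. -/
def mpSelect (D : ι → Vec m) (q : Vec m) : Option ι :=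
  let S := Finset.univ.filter fun j => ∀ j', |⟪D j', q⟫| ≤ |⟪D j, q⟫|
  if h : S.Nonempty then some (S.min' h) else none

/-- The MP residual after `s` iterations, with smallest-index tie-breaking. -/
def mpRes (D : ι → Vec m) (y : Vec m) : ℕ → Vec m
  | 0 => y
  | s + 1 =>
    let q := mpRes D y s
    match mpSelect D q with
    | some j => q - (⟪D j, q⟫ / ‖D j‖ ^ 2) • D j
    | none => q

/-- The set of distinct indices selected by MP during the first `s` iterations. -/
def mpSelUpTo [DecidableEq ι] (D : ι → Vec m) (y : Vec m) (s : ℕ) : Finset ι :=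
  (Finset.range s).biUnion fun t => (mpSelect D (mpRes D y t)).toFinset

end Concrete

/-- The statistical data model for subspace clustering: `L` subspaces of `ℝ^m` of dimensions
`d ℓ` given as ranges of linear isometries `U ℓ` (orthonormal basis matrices), `n ℓ` points per
subspace, with subspace components `a ℓ i` i.i.d. uniform on the unit sphere (characterized by
unit norm and rotational invariance) and noise `z ℓ i` i.i.d. `N(0, (σ²/m) I_m)`, all jointly
independent. -/
structure SubspaceClusterModel (Ω : Type*) [MeasurableSpace Ω] (μ : Measure Ω)
    (L m : ℕ) (d n : Fin L → ℕ) (σ : ℝ)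
    (U : (ℓ : Fin L) → EuclideanSpace ℝ (Fin (d ℓ)) →ₗᵢ[ℝ] Vec m)
    (a : (ℓ : Fin L) → Fin (n ℓ) → Ω → EuclideanSpace ℝ (Fin (d ℓ)))
    (z : (ℓ : Fin L) → Fin (n ℓ) → Ω → Vec m) : Prop where
  meas_a : ∀ ℓ i, Measurable (a ℓ i)
  meas_z : ∀ ℓ i, Measurable (z ℓ i)
  norm_a : ∀ ℓ i, ∀ᵐ ω ∂μ, ‖a ℓ i ω‖ = 1
  rotinv_a : ∀ ℓ i, ∀ W : EuclideanSpace ℝ (Fin (d ℓ)) ≃ₗᵢ[ℝ] EuclideanSpace ℝ (Fin (d ℓ)),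
    Measure.map (fun ω => W (a ℓ i ω)) μ = Measure.map (a ℓ i) μ
  coord_indep_z : ∀ ℓ i, iIndepFun (fun k ω => z ℓ i ω k) μ
  gauss_z : ∀ ℓ i, ∀ k : Fin m,
    Measure.map (fun ω => z ℓ i ω k) μ = gaussianReal 0 (Real.toNNReal (σ ^ 2 / m))
  indep_az : ∀ ℓ i, IndepFun (a ℓ i) (z ℓ i) μ
  indep_pts : iIndepFun
    (fun (p : (ℓ : Fin L) × Fin (n ℓ)) ω => (a p.1 p.2 ω, z p.1 p.2 ω)) μ

/-- The affinity between two subspaces given by orthonormal bases `Uk, Ul`: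
`‖Ukᵀ Ul‖_F / √(min dk dl)`. -/
def affinity {m dk dl : ℕ} (Uk : EuclideanSpace ℝ (Fin dk) →ₗᵢ[ℝ] Vec m)
    (Ul : EuclideanSpace ℝ (Fin dl) →ₗᵢ[ℝ] Vec m) : ℝ :=
  Real.sqrt (∑ p : Fin dk, ∑ q : Fin dl,
      ⟪Uk (EuclideanSpace.single p 1), Ul (EuclideanSpace.single q 1)⟫ ^ 2) /
    Real.sqrt (min dk dl)

/-- Total number of data points. -/
def Ntot (L : ℕ) (n : Fin L → ℕ) : ℕ := ∑ ℓ, n ℓ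

/-- Maximal subspace dimension. -/
def dMax (L : ℕ) (d : Fin L → ℕ) : ℕ := Finset.univ.sup d

/-- Minimal sampling density `ρ_min = min_ℓ (n_ℓ - 1)/d_ℓ`. -/
def rhoMin (L : ℕ) (d n : Fin L → ℕ) : ℝ := ⨅ ℓ : Fin L, ((n ℓ : ℝ) - 1) / (d ℓ : ℝ)

/-- The clustering condition with constant `c(σ) = cA` and effective iteration count `s`. -/
def ClusteringCond (L m : ℕ) (d n : Fin L → ℕ) (σ : ℝ) (s : ℕ)
    (U : (ℓ : Fin L) → EuclideanSpace ℝ (Fin (d ℓ)) →ₗᵢ[ℝ] Vec m) (cA : ℝ) : Prop :=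
  ∀ k ℓ : Fin L, k ≠ ℓ →
    affinity (U k) (U ℓ) +
        10 * σ / Real.sqrt (Real.log ((Ntot L n : ℝ) ^ 3 * s)) *
          (Real.sqrt (dMax L d) / Real.sqrt m * cA +
            Real.sqrt 2 / Real.sqrt (rhoMin L d n) * (1 + 3 / 2 * σ)) ≤
      1 / (8 * Real.log ((Ntot L n : ℝ) ^ 3 * s))

/-- The probability bound `P⋆`. -/
def Pstar (L m : ℕ) (d n : Fin L → ℕ) (cd cm : ℝ) : ℝ :=
  1 - 6 / (Ntot L n : ℝ) - 5 * (Ntot L n : ℝ) * Real.exp (-(cm * m)) -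
    6 * ∑ ℓ, (n ℓ : ℝ) * Real.exp (-(cd * d ℓ))

/-- Smallest singular value of a linear map out of `ℝ^s`. -/
def sminLin {s d : ℕ} (A : EuclideanSpace ℝ (Fin s) →ₗ[ℝ] EuclideanSpace ℝ (Fin d)) : ℝ :=
  ⨅ v : Metric.sphere (0 : EuclideanSpace ℝ (Fin s)) 1, ‖A (v : EuclideanSpace ℝ (Fin s))‖

/-- Spectral norm (largest singular value) of a linear map between Euclidean spaces. -/
def specNorm {s m : ℕ} (A : EuclideanSpace ℝ (Fin s) →ₗ[ℝ] Vec m) : ℝ :=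
  ‖LinearMap.toContinuousLinearMap A‖


/-- Orthogonal projection `P∥ = U Uᵀ` onto the subspace spanned by the orthonormal columns
of `U`, as a map `ℝ^M → ℝ^M`. -/
def projPar {M d : ℕ} (U : EuclideanSpace ℝ (Fin d) →ₗᵢ[ℝ] Vec M) (x : Vec M) : Vec M :=
  (Submodule.orthogonalProjectionOnto (LinearMap.range U.toLinearMap) x : Vec M)

/-- Orthogonal projection `P⊥ = I - U Uᵀ` onto the orthogonal complement. -/
def projPerp {M d : ℕ} (U : EuclideanSpace ℝ (Fin d) →ₗᵢ[ℝ] Vec M) (x : Vec M) : Vec M :=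
  x - projPar U x

/-- The data point `y_i^(ℓ) = U^(ℓ) a_i^(ℓ) + z_i^(ℓ)`. -/
def dataPt {Ω : Type*} {L M : ℕ} {d n : Fin L → ℕ}
    (U : (ℓ : Fin L) → EuclideanSpace ℝ (Fin (d ℓ)) →ₗᵢ[ℝ] Vec M)
    (a : (ℓ : Fin L) → Fin (n ℓ) → Ω → EuclideanSpace ℝ (Fin (d ℓ)))
    (z : (ℓ : Fin L) → Fin (n ℓ) → Ω → Vec M)
    (ℓ : Fin L) (i : Fin (n ℓ)) (ω : Ω) : Vec M :=
  U ℓ (a ℓ i ω) + z ℓ i ω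

/-- The reduced dictionary `Y_ℓ \ {y_i^(ℓ)}`. -/
def redDict {Ω : Type*} {L M : ℕ} {d n : Fin L → ℕ}
    (U : (ℓ : Fin L) → EuclideanSpace ℝ (Fin (d ℓ)) →ₗᵢ[ℝ] Vec M)
    (a : (ℓ : Fin L) → Fin (n ℓ) → Ω → EuclideanSpace ℝ (Fin (d ℓ)))
    (z : (ℓ : Fin L) → Fin (n ℓ) → Ω → Vec M)
    (ℓ : Fin L) (i : Fin (n ℓ)) (ω : Ω) : {j : Fin (n ℓ) // j ≠ i} → Vec M :=
  fun j => dataPt U a z ℓ j.1 ω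

/-- The full dictionary `Y \ {y_i^(ℓ)}`. -/
def fullDict {Ω : Type*} {L M : ℕ} {d n : Fin L → ℕ}
    (U : (ℓ : Fin L) → EuclideanSpace ℝ (Fin (d ℓ)) →ₗᵢ[ℝ] Vec M)
    (a : (ℓ : Fin L) → Fin (n ℓ) → Ω → EuclideanSpace ℝ (Fin (d ℓ)))
    (z : (ℓ : Fin L) → Fin (n ℓ) → Ω → Vec M)
    (ℓ : Fin L) (i : Fin (n ℓ)) (ω : Ω) :
    {p : (k : Fin L) × Fin (n k) // p ≠ ⟨ℓ, i⟩} → Vec M :=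
  fun p => dataPt U a z p.1.1 p.1.2 ω

/-- State (selected index set, residual) after `s` iterations of reduced OMP for `y_i^(ℓ)`. -/
def redOMPstate {Ω : Type*} {L M : ℕ} {d n : Fin L → ℕ}
    (U : (ℓ : Fin L) → EuclideanSpace ℝ (Fin (d ℓ)) →ₗᵢ[ℝ] Vec M)
    (a : (ℓ : Fin L) → Fin (n ℓ) → Ω → EuclideanSpace ℝ (Fin (d ℓ)))
    (z : (ℓ : Fin L) → Fin (n ℓ) → Ω → Vec M)
    (ℓ : Fin L) (i : Fin (n ℓ)) (s : ℕ) (ω : Ω) :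
    Finset {j : Fin (n ℓ) // j ≠ i} × Vec M :=
  ompState (redDict U a z ℓ i ω) (dataPt U a z ℓ i ω) s

/-- Residual after `s` iterations of reduced MP for `y_i^(ℓ)`. -/
def redMPres {Ω : Type*} {L M : ℕ} {d n : Fin L → ℕ}
    (U : (ℓ : Fin L) → EuclideanSpace ℝ (Fin (d ℓ)) →ₗᵢ[ℝ] Vec M)
    (a : (ℓ : Fin L) → Fin (n ℓ) → Ω → EuclideanSpace ℝ (Fin (d ℓ)))
    (z : (ℓ : Fin L) → Fin (n ℓ) → Ω → Vec M)
    (ℓ : Fin L) (i : Fin (n ℓ)) (s : ℕ) (ω : Ω) : Vec M :=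
  mpRes (redDict U a z ℓ i ω) (dataPt U a z ℓ i ω) s

/-- The linear map `ℝ^d → ℝ^n` whose rows are the vectors `a j` (that is, `Aᵀ` where the
`a j` are the columns of `A`). -/
def rowsMap {n d : ℕ} (a : Fin n → EuclideanSpace ℝ (Fin d)) :
    EuclideanSpace ℝ (Fin d) →ₗ[ℝ] EuclideanSpace ℝ (Fin n) where
  toFun v := WithLp.toLp 2 (fun j => ⟪a j, v⟫)
  map_add' u v := by
    ext j
    simp [inner_add_right]
  map_smul' c v := by
    ext j
    simp [inner_smul_right]

end


/-- **Pythagorean decomposition for projected residuals.** With `P` the orthogonal projection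
onto `S`, `P_Y` the projection onto the column space of `Y` (columns `v j`), and `P'` the
projection onto the column space of `P Y`, one has
`‖P(I-P_Y)y‖² = ‖P(I-P')y‖² + ‖(P' - P P_Y)y‖²`. -/
theorem pythagorean_projected_residual {m k : ℕ} (S : Submodule ℝ (Vec m))
    (v : Fin k → Vec m) (y : Vec m) :
    ‖(Submodule.orthogonalProjectionOnto S
        (y - (Submodule.orthogonalProjectionOnto (Submodule.span ℝ (Set.range v)) y : Vec m)) : Vec m)‖ ^ 2 =
      ‖(Submodule.orthogonalProjectionOnto S
          (y - (Submodule.orthogonalProjectionOnto (Submodule.span ℝ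
            (Set.range fun j => (Submodule.orthogonalProjectionOnto S (v j) : Vec m))) y : Vec m)) : Vec m)‖ ^ 2 +
      ‖((Submodule.orthogonalProjectionOnto (Submodule.span ℝ
            (Set.range fun j => (Submodule.orthogonalProjectionOnto S (v j) : Vec m))) y : Vec m) -
          (Submodule.orthogonalProjectionOnto S
            ((Submodule.orthogonalProjectionOnto (Submodule.span ℝ (Set.range v)) y : Vec m)) : Vec m))‖ ^ 2 := by
  set SY := Submodule.span ℝ (Set.range v) with hSY
  set S' := Submodule.span ℝ
    (Set.range fun j => (Submodule.orthogonalProjectionOnto S (v j) : Vec m)) with hS'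
  have hS'S : S' ≤ S := by
    rw [hS', Submodule.span_le]
    rintro _ ⟨j, rfl⟩
    exact (Submodule.orthogonalProjectionOnto S (v j)).2
  set a : Vec m :=
    (Submodule.orthogonalProjectionOnto S (y - (Submodule.orthogonalProjectionOnto S' y : Vec m)) : Vec m) with ha
  set b : Vec m := (Submodule.orthogonalProjectionOnto S' y : Vec m) -
    (Submodule.orthogonalProjectionOnto S ((Submodule.orthogonalProjectionOnto SY y : Vec m)) : Vec m) with hb
  -- P fixes elements of S
  have hfix : ∀ x : Vec m, x ∈ S → (Submodule.orthogonalProjectionOnto S x : Vec m) = x := fun x hx =>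
    Submodule.starProjection_eq_self_iff.2 hx
  -- b ∈ S'
  have hPmem : ∀ x : Vec m, x ∈ SY → (Submodule.orthogonalProjectionOnto S x : Vec m) ∈ S' := by
    intro x hx
    refine Submodule.span_induction ?_ ?_ ?_ ?_ hx
    · rintro _ ⟨j, rfl⟩
      exact Submodule.subset_span ⟨j, rfl⟩
    · simp
    · intro u w _ _ hu hw
      rw [map_add, Submodule.coe_add]; exact S'.add_mem hu hw
    · intro c u _ hu
      rw [_root_.map_smul, Submodule.coe_smul]; exact S'.smul_mem c hu
  have hbS' : b ∈ S' := S'.sub_mem (Submodule.orthogonalProjectionOnto S' y).2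
    (hPmem _ (Submodule.orthogonalProjectionOnto SY y).2)
  -- sum identity
  have hsum : a + b =
      (Submodule.orthogonalProjectionOnto S (y - (Submodule.orthogonalProjectionOnto SY y : Vec m)) : Vec m) := by
    rw [ha, hb, map_sub, map_sub, Submodule.coe_sub, Submodule.coe_sub,
      hfix _ (hS'S (Submodule.orthogonalProjectionOnto S' y).2)]
    abel
  -- orthogonality
  have hinner : ⟪a, b⟫ = 0 := by
    rw [real_inner_comm, ha, ← Submodule.starProjection_apply,
      ← Submodule.inner_starProjection_left_eq_right, Submodule.starProjection_apply,
      hfix _ (hS'S hbS')]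
    exact (Submodule.mem_orthogonal _ _).1
      (Submodule.sub_starProjection_mem_orthogonal (K := S') y) b hbS'
  rw [← hsum, norm_add_sq_real, hinner]
  ring
end

section
/- Monotone lower bound on the projected residual. Let S ⊆ ℝ^m be a linear subspace with orthogonal projection P onto S. Let y_1,…,y_n ∈ ℝ^m, let Γ ⊆ Γ' ⊆ [n], let P_Γ denote the orthogonal projection onto span{y_j : j ∈ Γ}, and let P'_{Γ'} denote the orthogonal projection onto span{P y_j : j ∈ Γ'}. Then for every y ∈ ℝ^m: ‖P(I − P_Γ)y‖₂ ≥ ‖P y‖₂ − ‖P'_{Γ'} P y‖₂. -/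
open MeasureTheory ProbabilityTheory Real Finset
open scoped RealInnerProductSpace ENNReal NNReal

/-- **Monotone lower bound on the projected residual.** With `P` the orthogonal projection
onto `S`, `P_Γ` the projection onto `span{y_j : j ∈ Γ}` and `P'_{Γ'}` the projection onto
`span{P y_j : j ∈ Γ'}`, `Γ ⊆ Γ'`, one has `‖P(I-P_Γ)y‖ ≥ ‖P y‖ - ‖P'_{Γ'} P y‖`. -/
theorem projected_residual_monotone_lower_bound {m n : ℕ} (S : Submodule ℝ (Vec m))
    (v : Fin n → Vec m) (Γ Γ' : Finset (Fin n)) (hΓ : Γ ⊆ Γ') (y : Vec m) :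
    ‖(Submodule.orthogonalProjectionOnto S y : Vec m)‖ -
        ‖(Submodule.orthogonalProjectionOnto (Submodule.span ℝ
            ((fun j => (Submodule.orthogonalProjectionOnto S (v j) : Vec m)) '' ↑Γ'))
          ((Submodule.orthogonalProjectionOnto S y : Vec m)) : Vec m)‖ ≤
      ‖(Submodule.orthogonalProjectionOnto S
          (y - (Submodule.orthogonalProjectionOnto (Submodule.span ℝ (v '' ↑Γ)) y : Vec m)) : Vec m)‖ := by
  set P : Vec m →L[ℝ] Vec m := (S.subtypeL.comp (Submodule.orthogonalProjectionOnto S)) with hP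
  have hPapp : ∀ x : Vec m, P x = (Submodule.orthogonalProjectionOnto S x : Vec m) := fun x => rfl
  set K : Submodule ℝ (Vec m) :=
    Submodule.span ℝ ((fun j => (Submodule.orthogonalProjectionOnto S (v j) : Vec m)) '' ↑Γ') with hK
  set w : Vec m := (Submodule.orthogonalProjectionOnto (Submodule.span ℝ (v '' ↑Γ)) y : Vec m) with hw
  have hwmem : P w ∈ K := by
    have h1 : w ∈ Submodule.span ℝ (v '' ↑Γ) := Subtype.coe_prop _
    have h2 : P w ∈ Submodule.map (P : Vec m →ₗ[ℝ] Vec m) (Submodule.span ℝ (v '' ↑Γ)) :=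
      Submodule.mem_map_of_mem h1
    rw [Submodule.map_span] at h2
    refine Submodule.span_mono ?_ h2
    rintro x ⟨x', ⟨j, hj, rfl⟩, rfl⟩
    exact ⟨j, hΓ hj, rfl⟩
  calc ‖P y‖ - ‖(Submodule.orthogonalProjectionOnto K (P y) : Vec m)‖
      ≤ ‖P y - (Submodule.orthogonalProjectionOnto K (P y) : Vec m)‖ := by
        have := norm_sub_norm_le (P y) ((Submodule.orthogonalProjectionOnto K (P y) : Vec m))
        linarith [this]
    _ ≤ ‖P y - P w‖ := by
        rw [← Submodule.starProjection_apply, Submodule.starProjection_minimal]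
        exact ciInf_le ⟨0, Set.forall_mem_range.mpr fun _ => norm_nonneg _⟩ (⟨P w, hwmem⟩ : K)
    _ = ‖P (y - w)‖ := by rw [map_sub]
    _ = ‖(Submodule.orthogonalProjectionOnto S (y - w) : Vec m)‖ := rfl
end

section
/- Deterministic bound on the out-of-subspace component of the OMP residual. Let U ∈ ℝ^{m×d} have orthonormal columns, S = range(U), and P⊥ = I − UUᵀ. Let y = x + z with x ∈ S and z ∈ ℝ^m. Let Y_Γ = U Ã_Γ + Z_Γ ∈ ℝ^{m×s}, where Ã_Γ ∈ ℝ^{d×s} has full column rank, so its smallest singular value σ_min(Ã_Γ) is positive. Then ‖P⊥ (I − Y_Γ Y_Γ†) y‖₂ ≤ ‖P⊥ z‖₂ + ( ‖Z_Γ‖_{2→2} / σ_min(Ã_Γ) ) ‖y‖₂, where ‖·‖_{2→2} is the spectral norm and † the Moore–Penrose pseudoinverse. -/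
open MeasureTheory ProbabilityTheory Real Finset
open scoped RealInnerProductSpace ENNReal NNReal

lemma projPerp_add' {M d : ℕ} (U : EuclideanSpace ℝ (Fin d) →ₗᵢ[ℝ] Vec M) (u v : Vec M) :
    projPerp U (u + v) = projPerp U u + projPerp U v := by
  simp only [projPerp, projPar, map_add, Submodule.coe_add]
  abel

lemma projPerp_sub' {M d : ℕ} (U : EuclideanSpace ℝ (Fin d) →ₗᵢ[ℝ] Vec M) (u v : Vec M) :
    projPerp U (u - v) = projPerp U u - projPerp U v := by
  simp only [projPerp, projPar, map_sub, Submodule.coe_sub]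
  abel

lemma projPerp_zero_of_mem {M d : ℕ} (U : EuclideanSpace ℝ (Fin d) →ₗᵢ[ℝ] Vec M) {v : Vec M}
    (h : v ∈ LinearMap.range U.toLinearMap) : projPerp U v = 0 := by
  have hh := (Submodule.starProjection_eq_self_iff (K := LinearMap.range U.toLinearMap)).2 h
  simp only [projPerp, projPar]
  exact sub_eq_zero.2 hh.symm

lemma key_lemma {m d : ℕ} (U : EuclideanSpace ℝ (Fin d) →ₗᵢ[ℝ] Vec m)
    (α : EuclideanSpace ℝ (Fin d)) (v : Vec m) :
    ‖α‖ * ‖projPerp U v‖ ≤ ‖v - U α‖ * ‖v‖ := by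
  set S := LinearMap.range U.toLinearMap with hS
  set pv : Vec m := projPar U v with hpv
  have hmem : v - pv ∈ Sᗮ := Submodule.sub_starProjection_mem_orthogonal v
  have hUα : (U α : Vec m) ∈ S := ⟨α, rfl⟩
  have hpvS : pv ∈ S := (S.orthogonalProjectionOnto v).2
  have h1 : ⟪pv - U α, v - pv⟫ = 0 := hmem _ (Submodule.sub_mem S hpvS hUα)
  have h2 : ⟪pv, v - pv⟫ = 0 := hmem _ hpvS
  have hperp : projPerp U v = v - pv := rfl
  rw [hperp]
  set t := ‖α‖ with ht
  set b := ‖pv‖ with hb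
  set c := ‖v - pv‖ with hc
  set q := ‖v - U α‖ with hqdef
  set r := ‖v‖ with hr
  set e := ‖pv - U α‖ with he
  have hq : q ^ 2 = e ^ 2 + c ^ 2 := by
    have hveq : v - U α = (pv - U α) + (v - pv) := by abel
    rw [hqdef, hveq, norm_add_sq_real, h1]
    ring
  have hrsq : r ^ 2 = b ^ 2 + c ^ 2 := by
    have hveq : v = pv + (v - pv) := by abel
    rw [hr]
    nth_rewrite 1 [hveq]
    rw [norm_add_sq_real, h2]
    ring
  have habs : |b - t| ≤ e := by
    have := abs_norm_sub_norm_le pv (U α : Vec m)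
    rwa [U.norm_map] at this
  have hbt : (b - t) ^ 2 ≤ e ^ 2 := by
    calc (b - t) ^ 2 = |b - t| ^ 2 := (sq_abs _).symm
    _ ≤ e ^ 2 := by
        have he0 : 0 ≤ e := norm_nonneg _
        nlinarith [abs_nonneg (b - t)]
  have h3 : (t * c) ^ 2 ≤ ((b - t) ^ 2 + c ^ 2) * (b ^ 2 + c ^ 2) := by
    nlinarith [sq_nonneg (t * b - b ^ 2 - c ^ 2)]
  have h4 : (t * c) ^ 2 ≤ (q * r) ^ 2 := by
    have hc2 : (0:ℝ) ≤ c ^ 2 := sq_nonneg _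
    calc (t * c) ^ 2 ≤ ((b - t) ^ 2 + c ^ 2) * (b ^ 2 + c ^ 2) := h3
    _ ≤ (e ^ 2 + c ^ 2) * (b ^ 2 + c ^ 2) := by
        apply mul_le_mul_of_nonneg_right (by linarith) (by positivity)
    _ = (q * r) ^ 2 := by rw [mul_pow, hq, hrsq]
  exact le_of_pow_le_pow_left₀ two_ne_zero (by positivity) h4


/-- **Deterministic bound on the out-of-subspace component of the OMP residual.** Here the
columns of `Y_Γ = U Ã_Γ + Z_Γ` are encoded as a linear map `Y = U ∘ A + Z` on `ℝ^s` (full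
column rank ↔ `A` injective), and `Y_Γ Y_Γ† y` is the orthogonal projection of `y` onto the
column space (= range) of `Y_Γ`. -/
theorem omp_residual_outSubspace_deterministic_bound {m d s : ℕ}
    (U : EuclideanSpace ℝ (Fin d) →ₗᵢ[ℝ] Vec m) (x z : Vec m)
    (hx : x ∈ LinearMap.range U.toLinearMap)
    (A : EuclideanSpace ℝ (Fin s) →ₗ[ℝ] EuclideanSpace ℝ (Fin d))
    (Z Y : EuclideanSpace ℝ (Fin s) →ₗ[ℝ] Vec m)
    (hY : Y = U.toLinearMap ∘ₗ A + Z)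
    (hA : Function.Injective A) :
    ‖projPerp U ((x + z) - (Submodule.orthogonalProjectionOnto (LinearMap.range Y) (x + z) : Vec m))‖ ≤
      ‖projPerp U z‖ + specNorm Z / sminLin A * ‖x + z‖ := by
  set y : Vec m := x + z with hy
  set K : Submodule ℝ (Vec m) := LinearMap.range Y with hK
  set p : Vec m := (K.orthogonalProjectionOnto y : Vec m) with hp
  obtain ⟨w, hw⟩ : p ∈ K := (K.orthogonalProjectionOnto y).2
  have hsplit : projPerp U (y - p) = projPerp U z - projPerp U p := by
    rw [projPerp_sub', hy, projPerp_add', projPerp_zero_of_mem U hx, zero_add]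
  have hsmin_nonneg : 0 ≤ sminLin A := by
    apply Real.iInf_nonneg; intro v; exact norm_nonneg _
  have hspec_nonneg : 0 ≤ specNorm Z := norm_nonneg _
  have hbound : ‖projPerp U p‖ ≤ specNorm Z / sminLin A * ‖y‖ := by
    by_cases hw0 : w = 0
    · have hp0 : p = 0 := by rw [← hw, hw0, map_zero]
      rw [hp0]
      have : projPerp U (0 : Vec m) = 0 := by
        simpa using projPerp_zero_of_mem U (Submodule.zero_mem _)
      rw [this, norm_zero]
      positivity
    · -- σ_min(A) > 0
      have hwn : (0:ℝ) < ‖w‖ := norm_pos_iff.2 hw0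
      have hbdd : BddBelow (Set.range fun v : Metric.sphere (0 : EuclideanSpace ℝ (Fin s)) 1 =>
          ‖A (v : EuclideanSpace ℝ (Fin s))‖) := ⟨0, by rintro _ ⟨v, rfl⟩; exact norm_nonneg _⟩
      have hmemsph : ‖w‖⁻¹ • w ∈ Metric.sphere (0 : EuclideanSpace ℝ (Fin s)) 1 := by
        simp [norm_smul, abs_of_pos (inv_pos.2 hwn), inv_mul_cancel₀ hwn.ne']
      have hne : Nonempty (Metric.sphere (0 : EuclideanSpace ℝ (Fin s)) 1) := ⟨⟨_, hmemsph⟩⟩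
      obtain ⟨v₀, hv₀mem, hv₀min⟩ := (isCompact_sphere (0 : EuclideanSpace ℝ (Fin s)) 1).exists_isMinOn
        ⟨_, hmemsph⟩ ((continuous_norm.comp A.continuous_of_finiteDimensional).continuousOn)
      have hv₀ne : v₀ ≠ 0 := by
        intro h
        rw [Metric.mem_sphere, h] at hv₀mem
        simp at hv₀mem
      have hAv₀ : 0 < ‖A v₀‖ := by
        rw [norm_pos_iff]
        intro h
        exact hv₀ne (hA (by rw [h, map_zero]))
      have hσpos : 0 < sminLin A := by
        apply lt_of_lt_of_le hAv₀
        apply le_ciInf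
        intro v
        exact hv₀min v.2
      have hAw : sminLin A * ‖w‖ ≤ ‖A w‖ := by
        have h1 : sminLin A ≤ ‖A (‖w‖⁻¹ • w)‖ := ciInf_le hbdd ⟨_, hmemsph⟩
        rw [_root_.map_smul, norm_smul, norm_inv, norm_norm, inv_mul_eq_div] at h1
        exact (le_div_iff₀ hwn).1 h1
      have hkey := key_lemma U (A w) p
      have hZw : p - U (A w) = Z w := by
        rw [← hw, hY]
        simp only [LinearMap.add_apply, LinearMap.comp_apply, LinearIsometry.coe_toLinearMap]
        abel
      have hZb : ‖Z w‖ ≤ specNorm Z * ‖w‖ :=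
        (LinearMap.toContinuousLinearMap Z).le_opNorm w
      have hpy : ‖p‖ ≤ ‖y‖ := by
        have h1 : ‖K.orthogonalProjectionOnto y‖ ≤ ‖K.orthogonalProjectionOnto‖ * ‖y‖ :=
          (K.orthogonalProjectionOnto).le_opNorm y
        have h2 : ‖K.orthogonalProjectionOnto‖ ≤ 1 := Submodule.orthogonalProjectionOnto_norm_le K
        calc ‖p‖ = ‖K.orthogonalProjectionOnto y‖ := rfl
        _ ≤ ‖K.orthogonalProjectionOnto‖ * ‖y‖ := h1
        _ ≤ 1 * ‖y‖ := mul_le_mul_of_nonneg_right h2 (norm_nonneg _)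
        _ = ‖y‖ := one_mul _
      rw [hZw] at hkey
      -- chain: sminLin A * ‖w‖ * ‖projPerp U p‖ ≤ specNorm Z * ‖w‖ * ‖y‖
      have chain : sminLin A * ‖w‖ * ‖projPerp U p‖ ≤ specNorm Z * ‖w‖ * ‖y‖ := by
        calc sminLin A * ‖w‖ * ‖projPerp U p‖ ≤ ‖A w‖ * ‖projPerp U p‖ :=
              mul_le_mul_of_nonneg_right hAw (norm_nonneg _)
        _ ≤ ‖Z w‖ * ‖p‖ := hkey
        _ ≤ (specNorm Z * ‖w‖) * ‖y‖ :=
              mul_le_mul hZb hpy (norm_nonneg _) (by positivity)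
      rw [div_mul_eq_mul_div, le_div_iff₀ hσpos]
      have hfin : ‖w‖ * (‖projPerp U p‖ * sminLin A) ≤ ‖w‖ * (specNorm Z * ‖y‖) := by
        nlinarith [chain]
      exact le_of_mul_le_mul_left hfin hwn
  calc ‖projPerp U (y - p)‖ = ‖projPerp U z - projPerp U p‖ := by rw [hsplit]
  _ ≤ ‖projPerp U z‖ + ‖projPerp U p‖ := norm_sub_le _ _
  _ ≤ ‖projPerp U z‖ + specNorm Z / sminLin A * ‖y‖ := by linarith [hbound]
end

section
/- Lemma 11 (rotational invariance of the reduced-MP residual). For every fixed ℓ ∈ [L] and i ∈ [n_ℓ], let q_s^(ℓ) denote the residual after s iterations of reduced MP applied to y_i^(ℓ) with dictionary Y_ℓ \ {y_i^(ℓ)}, and write q_{s∥} = P∥ q_s^(ℓ), q_{s⊥} = P⊥ q_s^(ℓ). Then the distributions of q_{s∥} and q_{s⊥} are rotationally invariant on S_ℓ and S_ℓ^⊥, respectively: V∥ q_{s∥} has the same distribution as q_{s∥} and V⊥ q_{s⊥} has the same distribution as q_{s⊥}, for all unitary matrices of the form V∥ = U^(ℓ) W∥ (U^(ℓ))ᵀ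 + P⊥ and V⊥ = P∥ + U_o^(ℓ) W⊥ (U_o^(ℓ))ᵀ, where W∥ ∈ ℝ^{d_ℓ×d_ℓ} and W⊥ ∈ ℝ^{(m−d_ℓ)×(m−d_ℓ)} are unitary and the columns of U_o^(ℓ) ∈ ℝ^{m×(m−d_ℓ)} form an orthonormal basis of S_ℓ^⊥. -/
open MeasureTheory ProbabilityTheory Real Finset
open scoped RealInnerProductSpace ENNReal NNReal

noncomputable section AuxProof

section MPAux

variable {m : ℕ} {ι : Type*} [Fintype ι] [LinearOrder ι]

lemma mpSelect_eq_some_iff {D : ι → Vec m} {q : Vec m} {j : ι} :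
    mpSelect D q = some j ↔
      (∀ j', |⟪D j', q⟫| ≤ |⟪D j, q⟫|) ∧
        ∀ k, (∀ j', |⟪D j', q⟫| ≤ |⟪D k, q⟫|) → j ≤ k := by
  classical
  unfold mpSelect
  set S := Finset.univ.filter fun j => ∀ j', |⟪D j', q⟫| ≤ |⟪D j, q⟫| with hS
  have hmem : ∀ k, k ∈ S ↔ ∀ j', |⟪D j', q⟫| ≤ |⟪D k, q⟫| := by
    intro k; simp [hS]
  by_cases h : S.Nonempty
  · simp only [dif_pos h, Option.some_inj]
    constructor
    · rintro rfl
      refine ⟨(hmem _).1 (S.min'_mem h), fun k hk => S.min'_le k ((hmem k).2 hk)⟩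
    · rintro ⟨h1, h2⟩
      exact le_antisymm (S.min'_le j ((hmem j).2 h1)) (h2 _ ((hmem _).1 (S.min'_mem h)))
  · simp only [dif_neg h]
    constructor
    · rintro ⟨⟩
    · rintro ⟨h1, -⟩
      exact absurd ⟨j, (hmem j).2 h1⟩ h

lemma mpSelect_isSome [Nonempty ι] (D : ι → Vec m) (q : Vec m) :
    ∃ j, mpSelect D q = some j := by
  classical
  obtain ⟨j0, -, hj0⟩ := Finset.exists_max_image Finset.univ (fun j => |⟪D j, q⟫|)
    ⟨Classical.arbitrary ι, Finset.mem_univ _⟩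
  have h : (Finset.univ.filter fun j => ∀ j', |⟪D j', q⟫| ≤ |⟪D j, q⟫|).Nonempty :=
    ⟨j0, Finset.mem_filter.2 ⟨Finset.mem_univ _, fun j' => hj0 j' (Finset.mem_univ _)⟩⟩
  exact ⟨_, dif_pos h⟩

lemma mpRes_succ (D : ι → Vec m) (y : Vec m) (s : ℕ) :
    mpRes D y (s + 1) = mpRes D y s -
      ∑ j : ι, (if mpSelect D (mpRes D y s) = some j
        then ⟪D j, mpRes D y s⟫ / ‖D j‖ ^ 2 else 0) • D j := by
  classical
  set q := mpRes D y s with hq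
  show (match mpSelect D q with
    | some j => q - (⟪D j, q⟫ / ‖D j‖ ^ 2) • D j
    | none => q) = _
  rcases ho : mpSelect D q with _ | j0
  · simp [ho]
  · simp only [ho]
    rw [Finset.sum_eq_single j0]
    · simp
    · intro b _ hb
      simp [hb, (by simpa [eq_comm] using hb : ¬ j0 = b)]
    · simp

/-- Equivariance of MP under a linear isometry equivalence. -/
lemma mpSelect_isometry (V : Vec m ≃ₗᵢ[ℝ] Vec m) (D : ι → Vec m) (q : Vec m) :
    mpSelect (fun j => V (D j)) (V q) = mpSelect D q := by
  unfold mpSelect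
  simp only [LinearIsometryEquiv.inner_map_map]

lemma mpRes_isometry (V : Vec m ≃ₗᵢ[ℝ] Vec m) (D : ι → Vec m) (y : Vec m) (s : ℕ) :
    mpRes (fun j => V (D j)) (V y) s = V (mpRes D y s) := by
  induction s with
  | zero => rfl
  | succ s ih =>
    rw [mpRes_succ, mpRes_succ, ih, mpSelect_isometry, map_sub, map_sum]
    congr 1
    refine Finset.sum_congr rfl fun j _ => ?_
    rw [_root_.map_smul, LinearIsometryEquiv.inner_map_map, LinearIsometryEquiv.norm_map]


end MPAux

section Meas

variable {m : ℕ} {ι : Type*} [Fintype ι] [LinearOrder ι]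

lemma measurable_mpStep {γ : Type*} [MeasurableSpace γ] (D : γ → ι → Vec m) (q : γ → Vec m)
    (hD : ∀ j, Measurable fun x => D x j) (hq : Measurable q) :
    Measurable fun x => q x -
      ∑ j : ι, (if mpSelect (D x) (q x) = some j
        then ⟪D x j, q x⟫ / ‖D x j‖ ^ 2 else 0) • D x j := by
  classical
  have habs : ∀ (j : ι), Measurable fun x => |⟪D x j, q x⟫| :=
    fun j => ((hD j).inner hq).abs
  have hmax : ∀ k, MeasurableSet {x | ∀ j', |⟪D x j', q x⟫| ≤ |⟪D x k, q x⟫|} := by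
    intro k
    rw [Set.setOf_forall]
    exact MeasurableSet.iInter fun j' => measurableSet_le (habs j') (habs k)
  have hA : ∀ j, MeasurableSet {x | mpSelect (D x) (q x) = some j} := by
    intro j
    have he : {x | mpSelect (D x) (q x) = some j} =
        {x | ∀ j', |⟪D x j', q x⟫| ≤ |⟪D x j, q x⟫|} ∩
          ⋂ k, ({x | ∀ j', |⟪D x j', q x⟫| ≤ |⟪D x k, q x⟫|}ᶜ ∪ {x | j ≤ k}) := by
      ext x
      simp only [Set.mem_setOf_eq, mpSelect_eq_some_iff, Set.mem_inter_iff, Set.mem_iInter,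
        Set.mem_union, Set.mem_compl_iff]
      constructor
      · rintro ⟨h1, h2⟩
        refine ⟨h1, fun k => ?_⟩
        by_cases hk : ∀ j', |⟪D x j', q x⟫| ≤ |⟪D x k, q x⟫|
        · exact Or.inr (h2 k hk)
        · exact Or.inl hk
      · rintro ⟨h1, h2⟩
        refine ⟨h1, fun k hk => ?_⟩
        rcases h2 k with h | h
        · exact absurd hk h
        · exact h
    rw [he]
    exact (hmax j).inter (MeasurableSet.iInter fun k =>
      ((hmax k).compl.union (MeasurableSet.const _)))
  refine hq.sub (Finset.measurable_sum _ fun j _ => Measurable.fun_smul ?_ (hD j))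
  exact Measurable.ite (hA j) (((hD j).inner hq).div (((hD j).norm).pow measurable_const))
    measurable_const

lemma measurable_mpRes {γ : Type*} [MeasurableSpace γ] (D : γ → ι → Vec m) (y : γ → Vec m)
    (hD : ∀ j, Measurable fun x => D x j) (hy : Measurable y) (s : ℕ) :
    Measurable fun x => mpRes (D x) (y x) s := by
  induction s with
  | zero => exact hy
  | succ s ih =>
    simp only [mpRes_succ]
    exact measurable_mpStep D (fun x => mpRes (D x) (y x) s) hD ih

end Meas

lemma pi_dirac_zero (M : ℕ) :
    Measure.pi (fun _ : Fin M => Measure.dirac (0 : ℝ)) = Measure.dirac (0 : Fin M → ℝ) := by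
  refine (Measure.pi_eq fun s hs => ?_)
  rw [Measure.dirac_apply' _ (MeasurableSet.univ_pi hs)]
  by_cases h : ∀ k, (0 : ℝ) ∈ s k
  · have hmem : (0 : Fin M → ℝ) ∈ Set.pi Set.univ s := fun k _ => h k
    rw [Set.indicator_of_mem hmem]
    rw [Finset.prod_congr rfl (fun k _ => by
      rw [Measure.dirac_apply' _ (hs k), Set.indicator_of_mem (h k)])]
    simp
  · push_neg at h
    obtain ⟨k, hk⟩ := h
    have hmem : (0 : Fin M → ℝ) ∉ Set.pi Set.univ s := fun hc => hk (hc k (Set.mem_univ k))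
    rw [Set.indicator_of_notMem hmem]
    refine (Finset.prod_eq_zero (Finset.mem_univ k) ?_).symm
    rw [Measure.dirac_apply' _ (hs k), Set.indicator_of_notMem hk]

lemma lintegral_pi_prod {n : ℕ} (μ : Measure ℝ) [SigmaFinite μ]
    (f : Fin n → ℝ → ℝ≥0∞) (hf : ∀ i, Measurable (f i)) :
    ∫⁻ x, ∏ i, f i (x i) ∂(Measure.pi fun _ : Fin n => μ) = ∏ i, ∫⁻ t, f i t ∂μ := by
  induction n with
  | zero =>
    simp [Measure.pi_of_empty (fun _ : Fin 0 => μ)]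
  | succ n ih =>
    have hmp := measurePreserving_piFinSuccAbove (fun _ : Fin (n + 1) => μ) 0
    have hemb := (MeasurableEquiv.piFinSuccAbove (fun _ : Fin (n + 1) => ℝ) 0).measurableEmbedding
    set F : ℝ × (Fin n → ℝ) → ℝ≥0∞ := fun p => f 0 p.1 * ∏ j, f j.succ (p.2 j) with hF
    have hcomp : ∀ x : Fin (n + 1) → ℝ,
        F (MeasurableEquiv.piFinSuccAbove (fun _ => ℝ) 0 x) = ∏ i, f i (x i) := by
      intro x
      rw [Fin.prod_univ_succ]
      simp [hF, MeasurableEquiv.piFinSuccAbove, Fin.zero_succAbove, Fin.tail]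
    calc ∫⁻ x, ∏ i, f i (x i) ∂(Measure.pi fun _ : Fin (n + 1) => μ)
        = ∫⁻ x, F (MeasurableEquiv.piFinSuccAbove (fun _ => ℝ) 0 x)
            ∂(Measure.pi fun _ : Fin (n + 1) => μ) := by
          exact (lintegral_congr fun x => (hcomp x).symm)
      _ = ∫⁻ p, F p ∂(μ.prod (Measure.pi fun _ : Fin n => μ)) :=
          hmp.lintegral_comp_emb hemb F
      _ = (∫⁻ t, f 0 t ∂μ) * ∫⁻ y, ∏ j : Fin n, f j.succ (y j)
            ∂(Measure.pi fun _ : Fin n => μ) := by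
          rw [hF]
          exact lintegral_prod_mul (hf 0).aemeasurable
            (Finset.measurable_prod _ fun (j : Fin n) _ => (hf j.succ).comp (measurable_pi_apply j)).aemeasurable
      _ = ∏ i, ∫⁻ t, f i t ∂μ := by
          rw [ih (fun j => f j.succ) (fun j => hf j.succ), Fin.prod_univ_succ]

lemma pi_withDensity (M : ℕ) (f : ℝ → ℝ≥0∞) (hf : Measurable f)
    [SigmaFinite ((volume : Measure ℝ).withDensity f)] :
    Measure.pi (fun _ : Fin M => (volume : Measure ℝ).withDensity f) =
      (volume : Measure (Fin M → ℝ)).withDensity fun x => ∏ k, f (x k) := by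
  refine Measure.pi_eq fun s hs => ?_
  rw [withDensity_apply _ (MeasurableSet.univ_pi hs)]
  have key : ∀ x : Fin M → ℝ, (Set.pi Set.univ s).indicator (fun x => ∏ k, f (x k)) x
      = ∏ k, (s k).indicator f (x k) := by
    intro x
    by_cases h : x ∈ Set.pi Set.univ s
    · rw [Set.indicator_of_mem h]
      exact Finset.prod_congr rfl fun k _ => (Set.indicator_of_mem (h k (Set.mem_univ k)) f).symm
    · rw [Set.indicator_of_notMem h]
      rw [Set.mem_univ_pi] at h
      push_neg at h
      obtain ⟨k, hk⟩ := h
      exact (Finset.prod_eq_zero (Finset.mem_univ k)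
        (by rw [Set.indicator_of_notMem hk])).symm
  rw [← lintegral_indicator (MeasurableSet.univ_pi hs)]
  rw [lintegral_congr key, volume_pi,
    lintegral_pi_prod volume _ (fun k => hf.indicator (hs k))]
  refine Finset.prod_congr rfl fun k _ => ?_
  rw [lintegral_indicator (hs k), withDensity_apply _ (hs k)]

lemma map_withDensity_equiv {α β : Type*} [MeasurableSpace α] [MeasurableSpace β]
    (g : α ≃ᵐ β) (μ : Measure α) (F : α → ℝ≥0∞) (hF : Measurable F) :
    Measure.map g (μ.withDensity F) = (Measure.map g μ).withDensity (F ∘ g.symm) := by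
  ext A hA
  rw [Measure.map_apply g.measurable hA, withDensity_apply _ (g.measurable hA),
    withDensity_apply _ hA, setLIntegral_map hA (hF.comp g.symm.measurable) g.measurable]
  refine setLIntegral_congr_fun (g.measurable hA) (fun x _ => ?_)
  simp

section GaussInv

variable {M : ℕ}

/-- The conjugated rotation on the plain pi type. -/
def rotPi (V : Vec M ≃ₗᵢ[ℝ] Vec M) : (Fin M → ℝ) ≃ᵐ (Fin M → ℝ) :=
  (((MeasurableEquiv.toLp 2 (Fin M → ℝ)).symm).symm.trans
    V.toHomeomorph.toMeasurableEquiv).trans ((MeasurableEquiv.toLp 2 (Fin M → ℝ)).symm)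

lemma rotPi_apply (V : Vec M ≃ₗᵢ[ℝ] Vec M) (x : Fin M → ℝ) :
    rotPi V x = (MeasurableEquiv.toLp 2 (Fin M → ℝ)).symm
      (V (((MeasurableEquiv.toLp 2 (Fin M → ℝ)).symm).symm x)) := rfl

lemma sum_sq_symm (w : Fin M → ℝ) :
    ∑ k, w k ^ 2 = ‖((MeasurableEquiv.toLp 2 (Fin M → ℝ)).symm).symm w‖ ^ 2 := by
  rw [EuclideanSpace.norm_eq, Real.sq_sqrt (by positivity)]
  refine Finset.sum_congr rfl fun k _ => ?_
  rw [Real.norm_eq_abs, sq_abs]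
  rfl

lemma rotPi_sum_sq (V : Vec M ≃ₗᵢ[ℝ] Vec M) (y : Fin M → ℝ) :
    ∑ k, ((rotPi V).symm y k) ^ 2 = ∑ k, y k ^ 2 := by
  rw [sum_sq_symm, sum_sq_symm y]
  have h : ((MeasurableEquiv.toLp 2 (Fin M → ℝ)).symm).symm ((rotPi V).symm y)
      = V.symm (((MeasurableEquiv.toLp 2 (Fin M → ℝ)).symm).symm y) := by
    rfl
  rw [h, LinearIsometryEquiv.norm_map]

lemma rotPi_measurePreserving (V : Vec M ≃ₗᵢ[ℝ] Vec M) :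
    MeasurePreserving (rotPi V) (volume : Measure (Fin M → ℝ)) volume := by
  have h1 := (EuclideanSpace.volume_preserving_symm_measurableEquiv_toLp (Fin M)).symm
  have h2 := V.measurePreserving
  have h3 := EuclideanSpace.volume_preserving_symm_measurableEquiv_toLp (Fin M)
  exact h3.comp (h2.comp h1)

lemma gaussian_pi_rot_invariance (v : ℝ≥0) (V : Vec M ≃ₗᵢ[ℝ] Vec M) :
    Measure.map (rotPi V) (Measure.pi fun _ : Fin M => gaussianReal 0 v) =
      Measure.pi fun _ : Fin M => gaussianReal 0 v := by
  by_cases hv : v = 0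
  · subst hv
    simp only [gaussianReal_zero_var, pi_dirac_zero]
    rw [Measure.map_dirac' (rotPi V).measurable]
    congr 1
    show rotPi V 0 = 0
    have : ((MeasurableEquiv.toLp 2 (Fin M → ℝ)).symm).symm 0 = 0 := rfl
    rw [rotPi_apply, this, map_zero]
    rfl
  · haveI : SigmaFinite ((volume : Measure ℝ).withDensity (gaussianPDF 0 v)) := by
      rw [← gaussianReal_of_var_ne_zero 0 hv]; infer_instance
    have hF : Measurable fun x : Fin M → ℝ => ∏ k, gaussianPDF 0 v (x k) :=
      Finset.measurable_prod _ fun k _ =>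
        (measurable_gaussianPDF 0 v).comp (measurable_pi_apply k)
    rw [gaussianReal_of_var_ne_zero 0 hv, pi_withDensity M _ (measurable_gaussianPDF 0 v),
      map_withDensity_equiv (rotPi V) volume _ hF,
      (rotPi_measurePreserving V).map_eq]
    congr 1
    funext y
    show ∏ k, gaussianPDF 0 v ((rotPi V).symm y k) = ∏ k, gaussianPDF 0 v (y k)
    have hprod : ∀ w : Fin M → ℝ, ∏ k, gaussianPDF 0 v (w k)
        = ENNReal.ofReal ((√(2 * π * v))⁻¹ ^ M * rexp (∑ k, -(w k) ^ 2 / (2 * v))) := by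
      intro w
      simp only [gaussianPDF, gaussianPDFReal, sub_zero]
      rw [← ENNReal.ofReal_prod_of_nonneg (fun k _ => by positivity)]
      congr 1
      rw [Finset.prod_mul_distrib, Finset.prod_const, Real.exp_sum, Finset.card_univ,
        Fintype.card_fin]
    rw [hprod, hprod]
    congr 2
    rw [← Finset.sum_div, ← Finset.sum_div]
    congr 2
    simp only [neg_eq_iff_eq_neg, Finset.sum_neg_distrib, neg_neg]
    rw [rotPi_sum_sq]

end GaussInv

/-- Rotational invariance of an i.i.d. Gaussian vector. -/
lemma gaussian_vec_rot_invariance {Ω : Type*} [MeasurableSpace Ω] (μ : Measure Ω)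
    [IsProbabilityMeasure μ] {M : ℕ} (z : Ω → Vec M) (hz : Measurable z) (v : ℝ≥0)
    (hindep : iIndepFun (fun k ω => z ω k) μ)
    (hgauss : ∀ k : Fin M, Measure.map (fun ω => z ω k) μ = gaussianReal 0 v)
    (V : Vec M ≃ₗᵢ[ℝ] Vec M) :
    Measure.map (fun ω => V (z ω)) μ = Measure.map z μ := by
  set e := (MeasurableEquiv.toLp 2 (Fin M → ℝ)).symm with he
  have hez : Measurable fun ω => e (z ω) := e.measurable.comp hz
  have hzk : ∀ k : Fin M, Measurable fun ω => z ω k := fun k =>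
    (measurable_pi_apply k).comp hez
  have h1 : Measure.pi (fun _ : Fin M => gaussianReal 0 v)
      = Measure.map (fun ω => e (z ω)) μ := by
    refine Measure.pi_eq fun s hs => ?_
    rw [Measure.map_apply hez (MeasurableSet.univ_pi hs)]
    have hpre : (fun ω => e (z ω)) ⁻¹' Set.pi Set.univ s
        = ⋂ k ∈ (Finset.univ : Finset (Fin M)), (fun ω => z ω k) ⁻¹' s k := by
      ext ω
      simp only [Set.mem_preimage, Set.mem_univ_pi, Set.mem_iInter, Finset.mem_univ,
        Set.iInter_true]
      rfl
    rw [hpre, hindep.measure_inter_preimage_eq_mul Finset.univ (fun k _ => hs k)]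
    exact Finset.prod_congr rfl fun k _ => by
      rw [← hgauss k, Measure.map_apply (hzk k) (hs k)]
  have hVz : (fun ω => V (z ω)) = fun ω => e.symm (rotPi V (e (z ω))) := by
    funext ω
    show V (z ω) = e.symm (e (V (e.symm (e (z ω)))))
    rw [e.symm_apply_apply, e.symm_apply_apply]
  rw [hVz]
  have : Measure.map (fun ω => e.symm (rotPi V (e (z ω)))) μ
      = Measure.map e.symm (Measure.map (rotPi V) (Measure.map (fun ω => e (z ω)) μ)) := by
    rw [Measure.map_map e.symm.measurable (rotPi V).measurable,
      Measure.map_map (e.symm.measurable.comp (rotPi V).measurable) hez]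
    rfl
  rw [this, ← h1, gaussian_pi_rot_invariance, h1,
    Measure.map_map e.symm.measurable hez]
  rfl

section Geometry

variable {M dl : ℕ} (J : EuclideanSpace ℝ (Fin dl) →ₗᵢ[ℝ] Vec M)

lemma adjoint_isometry_comp (c : EuclideanSpace ℝ (Fin dl)) :
    LinearMap.adjoint J.toLinearMap (J c) = c := by
  refine ext_inner_right ℝ fun e => ?_
  rw [LinearMap.adjoint_inner_left]
  exact J.inner_map_map c e

lemma adjoint_isometry_orthogonal {w : Vec M}
    (hw : w ∈ (LinearMap.range J.toLinearMap)ᗮ) :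
    LinearMap.adjoint J.toLinearMap w = 0 := by
  refine ext_inner_right ℝ fun e => ?_
  rw [LinearMap.adjoint_inner_left, inner_zero_left]
  exact (Submodule.mem_orthogonal' _ _).1 hw _ ⟨e, rfl⟩

lemma projPar_eq_adjoint (x : Vec M) :
    projPar J x = J (LinearMap.adjoint J.toLinearMap x) := by
  refine Submodule.eq_starProjection_of_mem_of_inner_eq_zero ⟨_, rfl⟩ fun w hw => ?_
  obtain ⟨c, rfl⟩ := hw
  rw [inner_sub_left, sub_eq_zero]
  show ⟪x, J c⟫ = ⟪J (LinearMap.adjoint J.toLinearMap x), J c⟫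
  rw [J.inner_map_map, LinearMap.adjoint_inner_left]
  rfl

lemma projPar_of_mem {x : Vec M} (hx : x ∈ LinearMap.range J.toLinearMap) :
    projPar J x = x := by
  obtain ⟨c, rfl⟩ := hx
  rw [projPar_eq_adjoint]
  show J (LinearMap.adjoint J.toLinearMap (J c)) = J c
  rw [adjoint_isometry_comp]

lemma projPar_of_orthogonal {x : Vec M} (hx : x ∈ (LinearMap.range J.toLinearMap)ᗮ) :
    projPar J x = 0 := by
  rw [projPar_eq_adjoint, adjoint_isometry_orthogonal J hx, map_zero]

lemma projPerp_mem_orthogonal (x : Vec M) :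
    projPerp J x ∈ (LinearMap.range J.toLinearMap)ᗮ :=
  Submodule.sub_starProjection_mem_orthogonal x

lemma projPar_mem (x : Vec M) : projPar J x ∈ LinearMap.range J.toLinearMap :=
  (Submodule.orthogonalProjectionOnto (LinearMap.range J.toLinearMap) x).2

lemma projPar_projPar (x : Vec M) : projPar J (projPar J x) = projPar J x :=
  projPar_of_mem J (projPar_mem J x)

lemma projPerp_projPar (x : Vec M) : projPerp J (projPar J x) = 0 := by
  rw [projPerp, projPar_projPar, sub_self]

lemma projPar_projPerp (x : Vec M) : projPar J (projPerp J x) = 0 :=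
  projPar_of_orthogonal J (projPerp_mem_orthogonal J x)

lemma par_add_perp (x : Vec M) : projPar J x + projPerp J x = x := by
  rw [projPerp]; abel

lemma adjoint_projPar (x : Vec M) :
    LinearMap.adjoint J.toLinearMap (projPar J x) = LinearMap.adjoint J.toLinearMap x := by
  conv_rhs => rw [← par_add_perp J x]
  rw [map_add, adjoint_isometry_orthogonal J (projPerp_mem_orthogonal J x), add_zero]

lemma norm_decomp (x : Vec M) : ‖x‖ ^ 2 = ‖projPar J x‖ ^ 2 + ‖projPerp J x‖ ^ 2 := by
  have horth : ⟪projPar J x, projPerp J x⟫ = 0 :=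
    (Submodule.mem_orthogonal _ _).1 (projPerp_mem_orthogonal J x) _ (projPar_mem J x)
  conv_lhs => rw [← par_add_perp J x]
  rw [norm_add_sq_real, horth]
  ring

lemma norm_eq_of_sq_eq_sq {u x : Vec M} (h : ‖u‖ ^ 2 = ‖x‖ ^ 2) : ‖u‖ = ‖x‖ := by
  have := congrArg Real.sqrt h
  rwa [Real.sqrt_sq (norm_nonneg _), Real.sqrt_sq (norm_nonneg _)] at this

end Geometry

section Rotations

variable {M dl : ℕ} (U : EuclideanSpace ℝ (Fin dl) →ₗᵢ[ℝ] Vec M)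

def VparMap (W : EuclideanSpace ℝ (Fin dl) ≃ₗᵢ[ℝ] EuclideanSpace ℝ (Fin dl)) :
    Vec M →ₗ[ℝ] Vec M :=
  (U.toLinearMap ∘ₗ W.toLinearEquiv.toLinearMap ∘ₗ LinearMap.adjoint U.toLinearMap) +
    (LinearMap.id - U.toLinearMap ∘ₗ LinearMap.adjoint U.toLinearMap)

lemma VparMap_apply (W : EuclideanSpace ℝ (Fin dl) ≃ₗᵢ[ℝ] EuclideanSpace ℝ (Fin dl))
    (x : Vec M) :
    VparMap U W x = U (W (LinearMap.adjoint U.toLinearMap x)) + projPerp U x := by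
  simp only [VparMap, LinearMap.add_apply, LinearMap.sub_apply, LinearMap.comp_apply,
    LinearMap.id_apply, projPerp, projPar_eq_adjoint]
  rfl

lemma VparMap_norm (W : EuclideanSpace ℝ (Fin dl) ≃ₗᵢ[ℝ] EuclideanSpace ℝ (Fin dl))
    (x : Vec M) : ‖VparMap U W x‖ = ‖x‖ := by
  rw [VparMap_apply]
  refine norm_eq_of_sq_eq_sq ?_
  have h1 : U (W (LinearMap.adjoint U.toLinearMap x)) ∈ LinearMap.range U.toLinearMap :=
    ⟨_, rfl⟩
  have horth : ⟪U (W (LinearMap.adjoint U.toLinearMap x)), projPerp U x⟫ = 0 :=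
    (Submodule.mem_orthogonal _ _).1 (projPerp_mem_orthogonal U x) _ h1
  rw [norm_add_sq_real, horth, U.norm_map, W.norm_map, norm_decomp U x,
    projPar_eq_adjoint, U.norm_map]
  ring

def VparEquiv (W : EuclideanSpace ℝ (Fin dl) ≃ₗᵢ[ℝ] EuclideanSpace ℝ (Fin dl)) :
    Vec M ≃ₗᵢ[ℝ] Vec M :=
  LinearIsometryEquiv.ofSurjective ⟨VparMap U W, VparMap_norm U W⟩
    ((LinearMap.injective_iff_surjective_of_finrank_eq_finrank rfl).1
      (LinearIsometry.injective ⟨VparMap U W, VparMap_norm U W⟩))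

lemma VparEquiv_apply (W : EuclideanSpace ℝ (Fin dl) ≃ₗᵢ[ℝ] EuclideanSpace ℝ (Fin dl))
    (x : Vec M) :
    VparEquiv U W x = U (W (LinearMap.adjoint U.toLinearMap x)) + projPerp U x := by
  rw [VparEquiv, LinearIsometryEquiv.coe_ofSurjective]
  exact VparMap_apply U W x

lemma VparEquiv_isometry_apply (W : EuclideanSpace ℝ (Fin dl) ≃ₗᵢ[ℝ] EuclideanSpace ℝ (Fin dl))
    (c : EuclideanSpace ℝ (Fin dl)) : VparEquiv U W (U c) = U (W c) := by
  rw [VparEquiv_apply, adjoint_isometry_comp, projPerp, projPar_of_mem U (x := U c) ⟨c, rfl⟩,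
    sub_self, add_zero]

lemma projPar_VparEquiv (W : EuclideanSpace ℝ (Fin dl) ≃ₗᵢ[ℝ] EuclideanSpace ℝ (Fin dl))
    (x : Vec M) :
    projPar U (VparEquiv U W x) = U (W (LinearMap.adjoint U.toLinearMap x)) := by
  rw [VparEquiv_apply]
  have : projPar U (U (W (LinearMap.adjoint U.toLinearMap x)) + projPerp U x)
      = projPar U (U (W (LinearMap.adjoint U.toLinearMap x))) + projPar U (projPerp U x) := by
    simp only [projPar, map_add]
    rfl
  rw [this, projPar_of_mem U (x := U (W (LinearMap.adjoint U.toLinearMap x))) ⟨_, rfl⟩,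
    projPar_projPerp, add_zero]

end Rotations

section RotPerp

variable {M dl dp : ℕ} (U : EuclideanSpace ℝ (Fin dl) →ₗᵢ[ℝ] Vec M)
  (Uo : EuclideanSpace ℝ (Fin dp) →ₗᵢ[ℝ] Vec M)
  (hUo : LinearMap.range Uo.toLinearMap = (LinearMap.range U.toLinearMap)ᗮ)

include hUo in
lemma projPerp_eq_projPar_perp (x : Vec M) : projPerp U x = projPar Uo x := by
  show projPerp U x = (Submodule.orthogonalProjectionOnto (LinearMap.range Uo.toLinearMap) x : Vec M)
  refine (Submodule.eq_starProjection_of_mem_orthogonal ?_ ?_).symm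
  · rw [hUo]
    exact Submodule.sub_starProjection_mem_orthogonal x
  · have h : x - projPerp U x = projPar U x := by rw [projPerp]; abel
    rw [h, hUo, Submodule.orthogonal_orthogonal]
    exact projPar_mem U x

lemma mem_range_isometry (c : EuclideanSpace ℝ (Fin dl)) :
    U c ∈ LinearMap.range U.toLinearMap := ⟨c, rfl⟩

include hUo in
lemma range_perp_eq : (LinearMap.range Uo.toLinearMap)ᗮ = LinearMap.range U.toLinearMap := by
  rw [hUo, Submodule.orthogonal_orthogonal]

include hUo in
lemma adjoint_perp_par (x : Vec M) :
    LinearMap.adjoint Uo.toLinearMap (projPar U x) = 0 := by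
  refine adjoint_isometry_orthogonal Uo ?_
  rw [range_perp_eq U Uo hUo]
  exact projPar_mem U x

include hUo in
lemma adjoint_perp_projPerp (x : Vec M) :
    LinearMap.adjoint Uo.toLinearMap (projPerp U x) = LinearMap.adjoint Uo.toLinearMap x := by
  conv_rhs => rw [← par_add_perp U x]
  rw [map_add, adjoint_perp_par U Uo hUo, zero_add]

def VperpMap (W' : EuclideanSpace ℝ (Fin dp) ≃ₗᵢ[ℝ] EuclideanSpace ℝ (Fin dp)) :
    Vec M →ₗ[ℝ] Vec M :=
  (U.toLinearMap ∘ₗ LinearMap.adjoint U.toLinearMap) +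
    (Uo.toLinearMap ∘ₗ W'.toLinearEquiv.toLinearMap ∘ₗ LinearMap.adjoint Uo.toLinearMap)

lemma VperpMap_apply (W' : EuclideanSpace ℝ (Fin dp) ≃ₗᵢ[ℝ] EuclideanSpace ℝ (Fin dp))
    (x : Vec M) :
    VperpMap U Uo W' x = projPar U x + Uo (W' (LinearMap.adjoint Uo.toLinearMap x)) := by
  simp only [VperpMap, LinearMap.add_apply, LinearMap.comp_apply, projPar_eq_adjoint]
  rfl

include hUo in
lemma VperpMap_norm (W' : EuclideanSpace ℝ (Fin dp) ≃ₗᵢ[ℝ] EuclideanSpace ℝ (Fin dp))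
    (x : Vec M) : ‖VperpMap U Uo W' x‖ = ‖x‖ := by
  rw [VperpMap_apply]
  refine norm_eq_of_sq_eq_sq ?_
  have h1 : Uo (W' (LinearMap.adjoint Uo.toLinearMap x)) ∈ (LinearMap.range U.toLinearMap)ᗮ := by
    rw [← hUo]; exact ⟨_, rfl⟩
  have horth : ⟪projPar U x, Uo (W' (LinearMap.adjoint Uo.toLinearMap x))⟫ = 0 :=
    (Submodule.mem_orthogonal _ _).1 h1 _ (projPar_mem U x)
  rw [norm_add_sq_real, horth, Uo.norm_map, W'.norm_map, norm_decomp U x]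
  have : ‖projPerp U x‖ = ‖LinearMap.adjoint Uo.toLinearMap x‖ := by
    rw [projPerp_eq_projPar_perp U Uo hUo, projPar_eq_adjoint, Uo.norm_map]
  rw [this]
  ring

def VperpEquiv (W' : EuclideanSpace ℝ (Fin dp) ≃ₗᵢ[ℝ] EuclideanSpace ℝ (Fin dp)) :
    Vec M ≃ₗᵢ[ℝ] Vec M :=
  LinearIsometryEquiv.ofSurjective ⟨VperpMap U Uo W', VperpMap_norm U Uo hUo W'⟩
    ((LinearMap.injective_iff_surjective_of_finrank_eq_finrank rfl).1
      (LinearIsometry.injective ⟨VperpMap U Uo W', VperpMap_norm U Uo hUo W'⟩))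

lemma VperpEquiv_apply (W' : EuclideanSpace ℝ (Fin dp) ≃ₗᵢ[ℝ] EuclideanSpace ℝ (Fin dp))
    (x : Vec M) :
    VperpEquiv U Uo hUo W' x = projPar U x + Uo (W' (LinearMap.adjoint Uo.toLinearMap x)) := by
  rw [VperpEquiv, LinearIsometryEquiv.coe_ofSurjective]
  exact VperpMap_apply U Uo W' x

include hUo in
lemma VperpEquiv_isometry_apply (W' : EuclideanSpace ℝ (Fin dp) ≃ₗᵢ[ℝ] EuclideanSpace ℝ (Fin dp))
    (c : EuclideanSpace ℝ (Fin dl)) : VperpEquiv U Uo hUo W' (U c) = U c := by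
  rw [VperpEquiv_apply, projPar_of_mem U (x := U c) ⟨c, rfl⟩]
  have h0 : LinearMap.adjoint Uo.toLinearMap (U c) = 0 := by
    refine adjoint_isometry_orthogonal Uo ?_
    rw [range_perp_eq U Uo hUo]
    exact ⟨c, rfl⟩
  rw [h0, map_zero, map_zero, add_zero]

include hUo in
lemma projPerp_VperpEquiv (W' : EuclideanSpace ℝ (Fin dp) ≃ₗᵢ[ℝ] EuclideanSpace ℝ (Fin dp))
    (x : Vec M) :
    projPerp U (VperpEquiv U Uo hUo W' x) = Uo (W' (LinearMap.adjoint Uo.toLinearMap x)) := by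
  rw [VperpEquiv_apply]
  have hadd : projPar U (projPar U x + Uo (W' (LinearMap.adjoint Uo.toLinearMap x)))
      = projPar U (projPar U x) + projPar U (Uo (W' (LinearMap.adjoint Uo.toLinearMap x))) := by
    simp only [projPar, map_add]
    rfl
  have hzero : projPar U (Uo (W' (LinearMap.adjoint Uo.toLinearMap x))) = 0 := by
    refine projPar_of_orthogonal U ?_
    rw [← hUo]
    exact ⟨_, rfl⟩
  rw [projPerp, hadd, hzero, projPar_projPar, add_zero, add_sub_cancel_left]

end RotPerp

section Distribution

variable {Ω : Type} [MeasurableSpace Ω] {μ : Measure Ω} [IsProbabilityMeasure μ]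
  {L M : ℕ} {d n : Fin L → ℕ} {σ : ℝ}
  {U : (ℓ : Fin L) → EuclideanSpace ℝ (Fin (d ℓ)) →ₗᵢ[ℝ] Vec M}
  {a : (ℓ : Fin L) → Fin (n ℓ) → Ω → EuclideanSpace ℝ (Fin (d ℓ))}
  {z : (ℓ : Fin L) → Fin (n ℓ) → Ω → Vec M}

/-- Product formula for the subfamily of pairs in cluster `ℓ`. -/
lemma subfamily_prod (hmodel : SubspaceClusterModel Ω μ L M d n σ U a z) (ℓ : Fin L)
    (sets : Fin (n ℓ) → Set (EuclideanSpace ℝ (Fin (d ℓ)) × Vec M))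
    (hs : ∀ j, MeasurableSet (sets j)) :
    μ (⋂ j, (fun ω => (a ℓ j ω, z ℓ j ω)) ⁻¹' sets j)
      = ∏ j, μ ((fun ω => (a ℓ j ω, z ℓ j ω)) ⁻¹' sets j) := by
  classical
  set emb : Fin (n ℓ) ↪ ((k : Fin L) × Fin (n k)) :=
    ⟨fun j => ⟨ℓ, j⟩, fun j j' h => eq_of_heq ((Sigma.mk.inj_iff.1 h).2)⟩ with hemb
  set sets' : ∀ p : (k : Fin L) × Fin (n k),
      Set (EuclideanSpace ℝ (Fin (d p.1)) × Vec M) :=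
    fun p => if h : p.1 = ℓ then h.symm ▸ sets (h ▸ p.2) else Set.univ with hsets'
  have hsets'_eq : ∀ j : Fin (n ℓ), sets' ⟨ℓ, j⟩ = sets j := fun j => dif_pos rfl
  have hgj : ∀ j : Fin (n ℓ), ((fun ω => (a (emb j).1 (emb j).2 ω, z (emb j).1 (emb j).2 ω))
      ⁻¹' sets' (emb j)) = (fun ω => (a ℓ j ω, z ℓ j ω)) ⁻¹' sets j := by
    intro j
    show ((fun ω => (a ℓ j ω, z ℓ j ω)) ⁻¹' sets' ⟨ℓ, j⟩) = _
    rw [hsets'_eq]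
  have hmeas : ∀ p, p ∈ Finset.univ.map emb → MeasurableSet (sets' p) := by
    rintro p hp
    rw [Finset.mem_map] at hp
    obtain ⟨j, -, rfl⟩ := hp
    show MeasurableSet (sets' ⟨ℓ, j⟩)
    rw [hsets'_eq]
    exact hs j
  have key := hmodel.indep_pts.measure_inter_preimage_eq_mul (Finset.univ.map emb)
    (sets := sets') hmeas
  have hset_eq : (⋂ p ∈ Finset.univ.map emb,
      (fun ω => (a p.1 p.2 ω, z p.1 p.2 ω)) ⁻¹' sets' p)
      = ⋂ j, (fun ω => (a ℓ j ω, z ℓ j ω)) ⁻¹' sets j := by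
    ext ω
    simp only [Set.mem_iInter, Finset.mem_map, Finset.mem_univ, true_and,
      forall_exists_index]
    constructor
    · intro h j
      have := h (emb j) j rfl
      rw [hgj j] at this
      exact this
    · intro h p j hj
      cases hj
      rw [hgj j]
      exact h j
  rw [hset_eq] at key
  rw [key, Finset.prod_map]
  refine Finset.prod_congr rfl fun j _ => ?_
  rw [hgj j]

/-- Invariance of the law of a single pair `(a, z)` under `(W, V)`. -/
lemma pair_invariance (hmodel : SubspaceClusterModel Ω μ L M d n σ U a z) (ℓ : Fin L)
    (j : Fin (n ℓ)) (W : EuclideanSpace ℝ (Fin (d ℓ)) ≃ₗᵢ[ℝ] EuclideanSpace ℝ (Fin (d ℓ)))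
    (V : Vec M ≃ₗᵢ[ℝ] Vec M) :
    Measure.map (fun ω => (W (a ℓ j ω), V (z ℓ j ω))) μ
      = Measure.map (fun ω => (a ℓ j ω, z ℓ j ω)) μ := by
  have ha := hmodel.meas_a ℓ j
  have hz := hmodel.meas_z ℓ j
  have hWa : Measurable fun ω => W (a ℓ j ω) := W.continuous.measurable.comp ha
  have hVz : Measurable fun ω => V (z ℓ j ω) := V.continuous.measurable.comp hz
  have hindep2 : IndepFun (fun ω => W (a ℓ j ω)) (fun ω => V (z ℓ j ω)) μ :=
    (hmodel.indep_az ℓ j).comp W.continuous.measurable V.continuous.measurable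
  rw [(indepFun_iff_map_prod_eq_prod_map_map ha.aemeasurable hz.aemeasurable).1
      (hmodel.indep_az ℓ j),
    (indepFun_iff_map_prod_eq_prod_map_map hWa.aemeasurable hVz.aemeasurable).1 hindep2,
    hmodel.rotinv_a ℓ j W,
    gaussian_vec_rot_invariance μ (z ℓ j) hz (Real.toNNReal (σ ^ 2 / M))
      (hmodel.coord_indep_z ℓ j) (hmodel.gauss_z ℓ j) V]

/-- Invariance of the law of the whole cluster-`ℓ` family under componentwise `(W, V)`. -/
lemma family_invariance (hmodel : SubspaceClusterModel Ω μ L M d n σ U a z) (ℓ : Fin L)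
    (W : EuclideanSpace ℝ (Fin (d ℓ)) ≃ₗᵢ[ℝ] EuclideanSpace ℝ (Fin (d ℓ)))
    (V : Vec M ≃ₗᵢ[ℝ] Vec M) :
    Measure.map (fun ω (j : Fin (n ℓ)) => (W (a ℓ j ω), V (z ℓ j ω))) μ
      = Measure.map (fun ω (j : Fin (n ℓ)) => (a ℓ j ω, z ℓ j ω)) μ := by
  classical
  have hX : Measurable fun ω (j : Fin (n ℓ)) => (a ℓ j ω, z ℓ j ω) :=
    measurable_pi_lambda _ fun j => (hmodel.meas_a ℓ j).prodMk (hmodel.meas_z ℓ j)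
  have hTX : Measurable fun ω (j : Fin (n ℓ)) => (W (a ℓ j ω), V (z ℓ j ω)) :=
    measurable_pi_lambda _ fun j =>
      (W.continuous.measurable.comp (hmodel.meas_a ℓ j)).prodMk
        (V.continuous.measurable.comp (hmodel.meas_z ℓ j))
  haveI h1 : IsProbabilityMeasure (Measure.map
      (fun ω (j : Fin (n ℓ)) => (W (a ℓ j ω), V (z ℓ j ω))) μ) :=
    Measure.isProbabilityMeasure_map hTX.aemeasurable
  haveI h2 : IsProbabilityMeasure (Measure.map
      (fun ω (j : Fin (n ℓ)) => (a ℓ j ω, z ℓ j ω)) μ) :=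
    Measure.isProbabilityMeasure_map hX.aemeasurable
  refine ext_of_generate_finite _ generateFrom_pi.symm isPiSystem_pi ?_ (by simp)
  rintro B ⟨s', hs', rfl⟩
  have hs'm : ∀ j, MeasurableSet (s' j) := fun j => hs' j (Set.mem_univ j)
  rw [Measure.map_apply hTX (MeasurableSet.univ_pi hs'm),
    Measure.map_apply hX (MeasurableSet.univ_pi hs'm)]
  have hpre1 : (fun ω (j : Fin (n ℓ)) => (W (a ℓ j ω), V (z ℓ j ω))) ⁻¹' Set.pi Set.univ s'
      = ⋂ j, (fun ω => (a ℓ j ω, z ℓ j ω)) ⁻¹'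
          ((fun p : EuclideanSpace ℝ (Fin (d ℓ)) × Vec M => (W p.1, V p.2)) ⁻¹' s' j) := by
    ext ω
    simp [Set.mem_univ_pi]
  have hpre2 : (fun ω (j : Fin (n ℓ)) => (a ℓ j ω, z ℓ j ω)) ⁻¹' Set.pi Set.univ s'
      = ⋂ j, (fun ω => (a ℓ j ω, z ℓ j ω)) ⁻¹' s' j := by
    ext ω
    simp [Set.mem_univ_pi]
  have hWVmeas : Measurable fun p : EuclideanSpace ℝ (Fin (d ℓ)) × Vec M => (W p.1, V p.2) :=
    (W.continuous.measurable.comp measurable_fst).prodMk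
      (V.continuous.measurable.comp measurable_snd)
  rw [hpre1, hpre2, subfamily_prod hmodel ℓ _ (fun j => hWVmeas (hs'm j)),
    subfamily_prod hmodel ℓ _ hs'm]
  refine Finset.prod_congr rfl fun j _ => ?_
  have ha := hmodel.meas_a ℓ j
  have hz := hmodel.meas_z ℓ j
  have hWa : Measurable fun ω => (W (a ℓ j ω), V (z ℓ j ω)) :=
    (W.continuous.measurable.comp ha).prodMk (V.continuous.measurable.comp hz)
  have hXj : Measurable fun ω => (a ℓ j ω, z ℓ j ω) := ha.prodMk hz
  have e1 : μ ((fun ω => (a ℓ j ω, z ℓ j ω)) ⁻¹'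
      ((fun p : EuclideanSpace ℝ (Fin (d ℓ)) × Vec M => (W p.1, V p.2)) ⁻¹' s' j))
      = (Measure.map (fun ω => (W (a ℓ j ω), V (z ℓ j ω))) μ) (s' j) :=
    (Measure.map_apply hWa (hs'm j)).symm
  have e2 : μ ((fun ω => (a ℓ j ω, z ℓ j ω)) ⁻¹' s' j)
      = (Measure.map (fun ω => (a ℓ j ω, z ℓ j ω)) μ) (s' j) :=
    (Measure.map_apply hXj (hs'm j)).symm
  rw [e1, e2, pair_invariance hmodel ℓ j W V]

/-- **Key invariance**: if a global rotation `V` acts on the subspace via `W`, then the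
reduced-MP residual's law is invariant under `V`. -/
lemma key_invariance (hmodel : SubspaceClusterModel Ω μ L M d n σ U a z) (ℓ : Fin L)
    (i : Fin (n ℓ)) (s : ℕ) (V : Vec M ≃ₗᵢ[ℝ] Vec M)
    (W : EuclideanSpace ℝ (Fin (d ℓ)) ≃ₗᵢ[ℝ] EuclideanSpace ℝ (Fin (d ℓ)))
    (hV : ∀ c, V (U ℓ c) = U ℓ (W c)) :
    Measure.map (fun ω => V (redMPres U a z ℓ i s ω)) μ
      = Measure.map (redMPres U a z ℓ i s) μ := by
  classical
  set E := EuclideanSpace ℝ (Fin (d ℓ))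
  set Φ : (Fin (n ℓ) → E × Vec M) → Vec M := fun t =>
    mpRes (fun jp : {j : Fin (n ℓ) // j ≠ i} => U ℓ (t jp.1).1 + (t jp.1).2)
      (U ℓ (t i).1 + (t i).2) s with hΦ
  have hΦmeas : Measurable Φ := by
    rw [hΦ]
    exact measurable_mpRes
      (fun (t : Fin (n ℓ) → E × Vec M) (jp : {j : Fin (n ℓ) // j ≠ i}) =>
        U ℓ (t jp.1).1 + (t jp.1).2)
      (fun t => U ℓ (t i).1 + (t i).2)
      (fun jp => ((U ℓ).continuous.measurable.comp
          (measurable_fst.comp (measurable_pi_apply jp.1))).add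
        (measurable_snd.comp (measurable_pi_apply jp.1)))
      (((U ℓ).continuous.measurable.comp
          (measurable_fst.comp (measurable_pi_apply i))).add
        (measurable_snd.comp (measurable_pi_apply i))) s
  have hX : Measurable fun ω (j : Fin (n ℓ)) => (a ℓ j ω, z ℓ j ω) :=
    measurable_pi_lambda _ fun j => (hmodel.meas_a ℓ j).prodMk (hmodel.meas_z ℓ j)
  have hTX : Measurable fun ω (j : Fin (n ℓ)) => (W (a ℓ j ω), V (z ℓ j ω)) :=
    measurable_pi_lambda _ fun j =>
      (W.continuous.measurable.comp (hmodel.meas_a ℓ j)).prodMk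
        (V.continuous.measurable.comp (hmodel.meas_z ℓ j))
  have hcomp1 : (fun ω => V (redMPres U a z ℓ i s ω))
      = fun ω => Φ (fun j => (W (a ℓ j ω), V (z ℓ j ω))) := by
    funext ω
    rw [hΦ]
    simp only
    have hdict : (fun jp : {j : Fin (n ℓ) // j ≠ i} =>
        U ℓ (W (a ℓ jp.1 ω)) + V (z ℓ jp.1 ω))
        = fun jp : {j : Fin (n ℓ) // j ≠ i} => V (redDict U a z ℓ i ω jp) := by
      funext jp
      rw [← hV, redDict, dataPt, map_add]
    have hy : U ℓ (W (a ℓ i ω)) + V (z ℓ i ω) = V (dataPt U a z ℓ i ω) := by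
      rw [← hV, dataPt, map_add]
    rw [show (fun jp : {j : Fin (n ℓ) // j ≠ i} =>
        U ℓ ((W (a ℓ jp.1 ω), V (z ℓ jp.1 ω)).1) + (W (a ℓ jp.1 ω), V (z ℓ jp.1 ω)).2)
        = fun jp : {j : Fin (n ℓ) // j ≠ i} =>
          U ℓ (W (a ℓ jp.1 ω)) + V (z ℓ jp.1 ω) from rfl, hdict, hy,
      mpRes_isometry V (redDict U a z ℓ i ω) (dataPt U a z ℓ i ω) s]
    rfl
  have hcomp2 : redMPres U a z ℓ i s
      = fun ω => Φ (fun j => (a ℓ j ω, z ℓ j ω)) := rfl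
  rw [hcomp1, hcomp2]
  have hm1 : (fun ω => Φ (fun j => (W (a ℓ j ω), V (z ℓ j ω))))
      = Φ ∘ (fun ω (j : Fin (n ℓ)) => (W (a ℓ j ω), V (z ℓ j ω))) := rfl
  have hm2 : (fun ω => Φ (fun j => (a ℓ j ω, z ℓ j ω)))
      = Φ ∘ (fun ω (j : Fin (n ℓ)) => (a ℓ j ω, z ℓ j ω)) := rfl
  rw [hm1, hm2, ← Measure.map_map hΦmeas hTX, ← Measure.map_map hΦmeas hX,
    family_invariance hmodel ℓ W V]

end Distribution

end AuxProof

/-- **Lemma 11 (rotational invariance of the reduced-MP residual).** -/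
theorem reducedMP_residual_rotational_invariance
    (Ω : Type) [MeasurableSpace Ω] (μ : Measure Ω) [IsProbabilityMeasure μ]
    (L M : ℕ) (d n : Fin L → ℕ) (σ : ℝ)
    (U : (ℓ : Fin L) → EuclideanSpace ℝ (Fin (d ℓ)) →ₗᵢ[ℝ] Vec M)
    (a : (ℓ : Fin L) → Fin (n ℓ) → Ω → EuclideanSpace ℝ (Fin (d ℓ)))
    (z : (ℓ : Fin L) → Fin (n ℓ) → Ω → Vec M)
    (hmodel : SubspaceClusterModel Ω μ L M d n σ U a z)
    (ℓ : Fin L) (i : Fin (n ℓ)) (s : ℕ) :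
    (∀ W : EuclideanSpace ℝ (Fin (d ℓ)) ≃ₗᵢ[ℝ] EuclideanSpace ℝ (Fin (d ℓ)),
      Measure.map
        (fun ω => U ℓ (W (LinearMap.adjoint (U ℓ).toLinearMap
            (projPar (U ℓ) (redMPres U a z ℓ i s ω)))) +
          projPerp (U ℓ) (projPar (U ℓ) (redMPres U a z ℓ i s ω))) μ =
      Measure.map (fun ω => projPar (U ℓ) (redMPres U a z ℓ i s ω)) μ) ∧
    (∀ (Uo : EuclideanSpace ℝ (Fin (M - d ℓ)) →ₗᵢ[ℝ] Vec M),
      LinearMap.range Uo.toLinearMap = (LinearMap.range (U ℓ).toLinearMap)ᗮ →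
      ∀ W' : EuclideanSpace ℝ (Fin (M - d ℓ)) ≃ₗᵢ[ℝ] EuclideanSpace ℝ (Fin (M - d ℓ)),
        Measure.map
          (fun ω => projPar (U ℓ) (projPerp (U ℓ) (redMPres U a z ℓ i s ω)) +
            Uo (W' (LinearMap.adjoint Uo.toLinearMap
              (projPerp (U ℓ) (redMPres U a z ℓ i s ω))))) μ =
        Measure.map (fun ω => projPerp (U ℓ) (redMPres U a z ℓ i s ω)) μ) := by
  have hrD : ∀ jp : {j : Fin (n ℓ) // j ≠ i}, Measurable fun ω => redDict U a z ℓ i ω jp :=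
    fun jp => ((U ℓ).continuous.measurable.comp (hmodel.meas_a ℓ jp.1)).add
      (hmodel.meas_z ℓ jp.1)
  have hry : Measurable fun ω => dataPt U a z ℓ i ω :=
    ((U ℓ).continuous.measurable.comp (hmodel.meas_a ℓ i)).add (hmodel.meas_z ℓ i)
  have hr : Measurable (redMPres U a z ℓ i s) :=
    measurable_mpRes (fun ω => redDict U a z ℓ i ω) (fun ω => dataPt U a z ℓ i ω) hrD hry s
  have hprojPar : Measurable fun x : Vec M => projPar (U ℓ) x :=
    (continuous_subtype_val.comp
      (Submodule.orthogonalProjectionOnto (LinearMap.range (U ℓ).toLinearMap)).continuous).measurable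
  have hprojPerp : Measurable fun x : Vec M => projPerp (U ℓ) x :=
    measurable_id.sub hprojPar
  constructor
  · intro W
    set V := VparEquiv (U ℓ) W with hVdef
    have hkey := key_invariance hmodel ℓ i s V W
      (fun c => VparEquiv_isometry_apply (U ℓ) W c)
    have hfun : (fun ω => U ℓ (W (LinearMap.adjoint (U ℓ).toLinearMap
          (projPar (U ℓ) (redMPres U a z ℓ i s ω)))) +
          projPerp (U ℓ) (projPar (U ℓ) (redMPres U a z ℓ i s ω)))
        = fun ω => projPar (U ℓ) (V (redMPres U a z ℓ i s ω)) := by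
      funext ω
      rw [adjoint_projPar, projPerp_projPar, add_zero, hVdef, projPar_VparEquiv]
    rw [hfun]
    have hVr : Measurable fun ω => V (redMPres U a z ℓ i s ω) :=
      V.continuous.measurable.comp hr
    calc Measure.map (fun ω => projPar (U ℓ) (V (redMPres U a z ℓ i s ω))) μ
        = Measure.map (fun x : Vec M => projPar (U ℓ) x)
            (Measure.map (fun ω => V (redMPres U a z ℓ i s ω)) μ) :=
          (Measure.map_map hprojPar hVr).symm
      _ = Measure.map (fun x : Vec M => projPar (U ℓ) x)
            (Measure.map (redMPres U a z ℓ i s) μ) := by rw [hkey]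
      _ = Measure.map (fun ω => projPar (U ℓ) (redMPres U a z ℓ i s ω)) μ :=
          Measure.map_map hprojPar hr
  · intro Uo hUo W'
    set V := VperpEquiv (U ℓ) Uo hUo W' with hVdef
    have hkey := key_invariance hmodel ℓ i s V
      (LinearIsometryEquiv.refl ℝ (EuclideanSpace ℝ (Fin (d ℓ))))
      (fun c => VperpEquiv_isometry_apply (U ℓ) Uo hUo W' c)
    have hfun : (fun ω => projPar (U ℓ) (projPerp (U ℓ) (redMPres U a z ℓ i s ω)) +
          Uo (W' (LinearMap.adjoint Uo.toLinearMap
            (projPerp (U ℓ) (redMPres U a z ℓ i s ω)))))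
        = fun ω => projPerp (U ℓ) (V (redMPres U a z ℓ i s ω)) := by
      funext ω
      rw [projPar_projPerp, zero_add, adjoint_perp_projPerp (U ℓ) Uo hUo, hVdef,
        projPerp_VperpEquiv]
    rw [hfun]
    have hVr : Measurable fun ω => V (redMPres U a z ℓ i s ω) :=
      V.continuous.measurable.comp hr
    calc Measure.map (fun ω => projPerp (U ℓ) (V (redMPres U a z ℓ i s ω))) μ
        = Measure.map (fun x : Vec M => projPerp (U ℓ) x)
            (Measure.map (fun ω => V (redMPres U a z ℓ i s ω)) μ) :=
          (Measure.map_map hprojPerp hVr).symm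
      _ = Measure.map (fun x : Vec M => projPerp (U ℓ) x)
            (Measure.map (redMPres U a z ℓ i s) μ) := by rw [hkey]
      _ = Measure.map (fun ω => projPerp (U ℓ) (redMPres U a z ℓ i s ω)) μ :=
          Measure.map_map hprojPerp hr
end

section
/- Deterministic lower bound on the projected MP residual. Let q_s be the MP residuals for y ∈ ℝ^m with dictionary y_1,…,y_n ∈ ℝ^m, let Ω_s = {ω_1,…,ω_s} be the set of indices selected up to iteration s, let P be the orthogonal projection onto a linear subspace S ⊆ ℝ^m, and for an index set Ω let P'_Ω denote the orthogonal projection onto span{P y_j : j ∈ Ω}. Then for all s ≤ s': ‖P q_s‖₂ ≥ ‖(I − P'_{Ω_{s'}}) P y‖₂. -/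
open MeasureTheory ProbabilityTheory Real Finset
open scoped RealInnerProductSpace ENNReal NNReal

/-- **Deterministic lower bound on the projected MP residual.** For any MP run, any subspace
`S` with projection `P`, and `s ≤ s'`, `‖P q_s‖ ≥ ‖(I - P'_{Ω_{s'}}) P y‖`, where `P'_Ω`
projects onto `span{P y_j : j ∈ Ω}` and `Ω_{s'}` is the set of indices selected up to
iteration `s'`. -/
theorem mp_projected_residual_lower_bound {m n : ℕ} (D : Fin n → Vec m) (y : Vec m)
    (T : ℕ) (sel : ℕ → Fin n) (q : ℕ → Vec m) (h : IsMPRun D y T sel q)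
    (S : Submodule ℝ (Vec m)) (s s' : ℕ) (hss' : s ≤ s') (hs'T : s' ≤ T) :
    ‖(Submodule.orthogonalProjectionOnto S y : Vec m) -
        (Submodule.orthogonalProjectionOnto (Submodule.span ℝ
            ((fun j => (Submodule.orthogonalProjectionOnto S (D j) : Vec m)) ''
              ↑((Finset.range s').image sel)))
          ((Submodule.orthogonalProjectionOnto S y : Vec m)) : Vec m)‖ ≤
      ‖(Submodule.orthogonalProjectionOnto S (q s) : Vec m)‖ := by
  classical
  set V := Submodule.span ℝ
      ((fun j => (Submodule.orthogonalProjectionOnto S (D j) : Vec m)) ''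
        ↑((Finset.range s').image sel)) with hV
  have hmem : ∀ t, t ≤ s' →
      (Submodule.orthogonalProjectionOnto S y : Vec m) - (Submodule.orthogonalProjectionOnto S (q t) : Vec m) ∈ V := by
    intro t
    induction t with
    | zero => intro _; simp [h.init]
    | succ t ih =>
      intro ht
      have htT : t < T := lt_of_lt_of_le ht hs'T
      have hqt : q (t + 1) = q t - (⟪D (sel t), q t⟫ / ‖D (sel t)‖ ^ 2) • D (sel t) :=
        h.res t htT
      have hsel : (Submodule.orthogonalProjectionOnto S (D (sel t)) : Vec m) ∈ V := by
        apply Submodule.subset_span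
        exact ⟨sel t, by
          simp only [Finset.coe_image, Finset.coe_range, Set.mem_image, Set.mem_Iio]
          exact ⟨t, ht, rfl⟩, rfl⟩
      have key : (Submodule.orthogonalProjectionOnto S y : Vec m) -
          (Submodule.orthogonalProjectionOnto S (q (t + 1)) : Vec m) =
          ((Submodule.orthogonalProjectionOnto S y : Vec m) - (Submodule.orthogonalProjectionOnto S (q t) : Vec m)) +
            (⟪D (sel t), q t⟫ / ‖D (sel t)‖ ^ 2) •
              (Submodule.orthogonalProjectionOnto S (D (sel t)) : Vec m) := by
        rw [hqt, map_sub, _root_.map_smul]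
        push_cast
        ring_nf
        abel
      rw [key]
      exact V.add_mem (ih (le_of_lt ht)) (V.smul_mem _ hsel)
  have hw : (Submodule.orthogonalProjectionOnto S y : Vec m) - (Submodule.orthogonalProjectionOnto S (q s) : Vec m) ∈ V :=
    hmem s hss'
  have hmin : ‖(Submodule.orthogonalProjectionOnto S y : Vec m) -
      (Submodule.orthogonalProjectionOnto V (Submodule.orthogonalProjectionOnto S y : Vec m) : Vec m)‖ =
      ⨅ x : V, ‖(Submodule.orthogonalProjectionOnto S y : Vec m) - x‖ :=
    Submodule.starProjection_minimal _
  rw [hmin]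
  refine ciInf_le_of_le ⟨0, ?_⟩ (⟨_, hw⟩ : V) ?_
  · rintro r ⟨x, rfl⟩; positivity
  · simp
end
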